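/- arXiv:math/0001108 — 5 statements merged into one kernel-verified Lean document; each statement's English description precedes it below -/
import Mathlib

section
/- For every n, m, k ∈ ℕ and every C > 0 there exists D > 0 (depending only on n, m, k, C) with the following property. Let A : ℝᵐ → Matrix (Fin n) (Fin n) ℝ be k-times continuously differentiable on a neighborhood of a point x ∈ ℝᵐ, such that A y is invertible for all y in a neighborhood of x. If ‖iteratedFDeriv ℝ i A x‖ ≤ C for all i ≤ k and ‖(A x)⁻¹‖ ≤ C, then ‖iteratedFDeriv ℝ k (fun y ↦ (A y)⁻¹) x‖ ≤ D. -/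
set_option maxSynthPendingDepth 2
set_option maxHeartbeats 1000000

attribute [local instance] Matrix.linftyOpNormedAddCommGroup Matrix.linftyOpNormedSpace
  Matrix.linftyOpNormedRing Matrix.linftyOpNormedAlgebra

/-- Abbreviation for square matrices with the `linftyOp` norm. -/
abbrev MatInvBound.Mat (n : ℕ) : Type := Matrix (Fin n) (Fin n) ℝ

/-- Abbreviation for the source Euclidean space. -/
abbrev MatInvBound.Euc (m : ℕ) : Type := EuclideanSpace ℝ (Fin m)

section KeyInvBound

/-- Normed group structure on `Euc m →L[ℝ] Mat n`. -/
@[reducible]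
noncomputable def MatInvBound.instNACG₁ (n m : ℕ) :
    NormedAddCommGroup (MatInvBound.Euc m →L[ℝ] MatInvBound.Mat n) :=
  ContinuousLinearMap.toNormedAddCommGroup

attribute [local instance] MatInvBound.instNACG₁

/-- Normed space structure on `Euc m →L[ℝ] Mat n`. -/
@[reducible]
noncomputable def MatInvBound.instNS₁ (n m : ℕ) :
    NormedSpace ℝ (MatInvBound.Euc m →L[ℝ] MatInvBound.Mat n) :=
  ContinuousLinearMap.toNormedSpace

/-- Normed group structure on `Mat n →L[ℝ] Mat n`. -/
@[reducible]
noncomputable def MatInvBound.instNACG₂ (n : ℕ) :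
    NormedAddCommGroup (MatInvBound.Mat n →L[ℝ] MatInvBound.Mat n) :=
  ContinuousLinearMap.toNormedAddCommGroup

attribute [local instance] MatInvBound.instNACG₂

/-- Normed space structure on `Mat n →L[ℝ] Mat n`. -/
@[reducible]
noncomputable def MatInvBound.instNS₂ (n : ℕ) :
    NormedSpace ℝ (MatInvBound.Mat n →L[ℝ] MatInvBound.Mat n) :=
  ContinuousLinearMap.toNormedSpace

attribute [local instance] MatInvBound.instNS₁ MatInvBound.instNS₂

open ContinuousLinearMap MatInvBound in
/-- Key inductive lemma: bounds on all derivatives of `Ring.inverse ∘ A` up to order `k`. -/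
theorem key_inv_bound (n m : ℕ) : ∀ (k : ℕ) (C : ℝ), 0 < C →
    ∃ D > 0, ∀ (A : Euc m → Mat n) (x : Euc m) (s : Set (Euc m)),
      IsOpen s → x ∈ s → ContDiffOn ℝ k A s →
      (∀ y ∈ s, IsUnit (A y)) →
      (∀ i ≤ k, ‖iteratedFDerivWithin ℝ i A s x‖ ≤ C) →
      ‖Ring.inverse (A x)‖ ≤ C →
      ∀ i ≤ k, ‖iteratedFDerivWithin ℝ i (fun y => Ring.inverse (A y)) s x‖ ≤ D := by
  intro k
  induction k with
  | zero =>
    intro C hC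
    refine ⟨C, hC, fun A x s hs hx hA hU hbound hinv i hi => ?_⟩
    obtain rfl := Nat.le_zero.1 hi
    rw [norm_iteratedFDerivWithin_zero]
    exact hinv
  | succ k IH =>
    intro C hC
    obtain ⟨D, hD, hind⟩ := IH C hC
    have c1nn : (0:ℝ) ≤ ‖mulLeftRight ℝ (Mat n)‖ := (mulLeftRight ℝ (Mat n)).opNorm_nonneg
    have c0nn : (0:ℝ) ≤ ‖compL ℝ (Euc m) (Mat n) (Mat n)‖ :=
      (compL ℝ (Euc m) (Mat n) (Mat n)).opNorm_nonneg
    refine ⟨max D (‖compL ℝ (Euc m) (Mat n) (Mat n)‖ *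
        (2 ^ k * (‖mulLeftRight ℝ (Mat n)‖ * (2 ^ k * (D * D)) * C))),
      lt_max_of_lt_left hD, fun A x s hs hx hA hU hbound hinv i hi => ?_⟩
    set B : Euc m → Mat n := fun y => Ring.inverse (A y) with hB
    have uniq : UniqueDiffOn ℝ s := hs.uniqueDiffOn
    have hkk : (k : WithTop ℕ∞) ≤ (k + 1 : ℕ) := by exact_mod_cast Nat.le_succ k
    have hBd : ∀ l ≤ k, ‖iteratedFDerivWithin ℝ l B s x‖ ≤ D :=
      hind A x s hs hx (hA.of_le hkk) hU
        (fun j hj => hbound j (hj.trans (Nat.le_succ k))) hinv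
    rcases Nat.lt_succ_iff_lt_or_eq.1 (Nat.lt_succ_of_le hi) with h | rfl
    · exact (hBd i (Nat.lt_succ_iff.1 h)).trans (le_max_left _ _)
    -- the interesting case `i = k + 1`
    have hBk : ContDiffOn ℝ k B s := by
      intro y hy
      have h1 : ContDiffAt ℝ k Ring.inverse (A y) := by
        have h := contDiffAt_ringInverse (n := (k : WithTop ℕ∞)) ℝ (R := Mat n) (hU y hy).unit
        rwa [(hU y hy).unit_spec] at h
      exact h1.comp_contDiffWithinAt y ((hA y hy).of_le hkk)
    set G : Euc m → (Euc m →L[ℝ] Mat n) := fderivWithin ℝ A s with hG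
    set F : Euc m → (Mat n →L[ℝ] Mat n) := fun y => mulLeftRight ℝ (Mat n) (B y) (B y) with hF
    set g : Euc m → (Euc m →L[ℝ] Mat n) :=
      fun y => (-compL ℝ (Euc m) (Mat n) (Mat n)) (F y) (G y) with hg
    have hEq : Set.EqOn (fderivWithin ℝ B s) g s := by
      intro y hy
      have hu := hU y hy
      have hA' : HasFDerivWithinAt A (G y) s y :=
        ((hA.differentiableOn (by exact_mod_cast Nat.succ_ne_zero k))
          y hy).hasFDerivWithinAt
      have e : ((hu.unit⁻¹ : (Mat n)ˣ) : Mat n) = Ring.inverse (A y) := by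
        rw [← Ring.inverse_unit, hu.unit_spec]
      have hinv' : HasFDerivAt Ring.inverse (-mulLeftRight ℝ (Mat n) (B y) (B y)) (A y) := by
        have h := hasFDerivAt_ringInverse (𝕜 := ℝ) hu.unit
        rwa [hu.unit_spec, e] at h
      have hcomp : HasFDerivWithinAt B ((-mulLeftRight ℝ (Mat n) (B y) (B y)).comp (G y)) s y :=
        hinv'.comp_hasFDerivWithinAt y hA'
      refine (hcomp.fderivWithin (uniq y hy)).trans ?_
      ext v
      simp [g, F, G]
      rfl
    have hGk : ContDiffOn ℝ k G s := hA.fderivWithin (m := (k : WithTop ℕ∞)) uniq (by exact_mod_cast le_refl (k + 1))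
    have hFk : ContDiffOn ℝ k F s :=
      ((mulLeftRight ℝ (Mat n)).contDiff.comp_contDiffOn hBk).clm_apply hBk
    have sumchoose : ∀ j : ℕ, ∑ l ∈ Finset.range (j + 1), (j.choose l : ℝ) = 2 ^ j := by
      intro j
      exact_mod_cast congrArg (Nat.cast : ℕ → ℝ) (Nat.sum_range_choose j)
    have hFb : ∀ j ≤ k, ‖iteratedFDerivWithin ℝ j F s x‖ ≤
        ‖mulLeftRight ℝ (Mat n)‖ * (2 ^ k * (D * D)) := by
      intro j hj
      have h1 := (mulLeftRight ℝ (Mat n)).norm_iteratedFDerivWithin_le_of_bilinear hBk hBk uniq hx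
        (n := j) (by exact_mod_cast hj)
      refine h1.trans ?_
      have h2 : ∑ l ∈ Finset.range (j + 1), (j.choose l : ℝ) *
          ‖iteratedFDerivWithin ℝ l B s x‖ * ‖iteratedFDerivWithin ℝ (j - l) B s x‖ ≤
          ∑ l ∈ Finset.range (j + 1), (j.choose l : ℝ) * D * D := by
        refine Finset.sum_le_sum fun l hl => ?_
        have hl' : l ≤ j := Nat.lt_succ_iff.1 (Finset.mem_range.1 hl)
        exact mul_le_mul
          (mul_le_mul_of_nonneg_left (hBd l (hl'.trans hj)) (by positivity))
          (hBd (j - l) ((Nat.sub_le j l).trans hj)) (norm_nonneg _)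
          (by positivity)
      have h3 : ∑ l ∈ Finset.range (j + 1), (j.choose l : ℝ) * D * D = 2 ^ j * (D * D) := by
        rw [← Finset.sum_mul, ← Finset.sum_mul, sumchoose, mul_assoc]
      refine (mul_le_mul_of_nonneg_left (h2.trans h3.le) (norm_nonneg _)).trans ?_
      have h4 : (2:ℝ) ^ j ≤ 2 ^ k := pow_le_pow_right₀ one_le_two hj
      exact mul_le_mul_of_nonneg_left (mul_le_mul_of_nonneg_right h4 (by positivity)) c1nn
    have hGb : ∀ j ≤ k, ‖iteratedFDerivWithin ℝ j G s x‖ ≤ C := by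
      intro j hj
      rw [hG]
      exact (norm_iteratedFDerivWithin_fderivWithin uniq hx).trans_le (hbound (j + 1) (by omega))
    have hmain := (-compL ℝ (Euc m) (Mat n) (Mat n)).norm_iteratedFDerivWithin_le_of_bilinear
      (f := F) (g := G) (N := (k : WithTop ℕ∞)) hFk hGk uniq hx (n := k) le_rfl
    rw [norm_neg] at hmain
    have hsum : ∑ j ∈ Finset.range (k + 1), (k.choose j : ℝ) *
        ‖iteratedFDerivWithin ℝ j F s x‖ * ‖iteratedFDerivWithin ℝ (k - j) G s x‖ ≤
        2 ^ k * (‖mulLeftRight ℝ (Mat n)‖ * (2 ^ k * (D * D)) * C) := by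
      have h2 : ∑ j ∈ Finset.range (k + 1), (k.choose j : ℝ) *
          ‖iteratedFDerivWithin ℝ j F s x‖ * ‖iteratedFDerivWithin ℝ (k - j) G s x‖ ≤
          ∑ j ∈ Finset.range (k + 1), (k.choose j : ℝ) *
            (‖mulLeftRight ℝ (Mat n)‖ * (2 ^ k * (D * D))) * C := by
        refine Finset.sum_le_sum fun j hj => ?_
        have hj' : j ≤ k := Nat.lt_succ_iff.1 (Finset.mem_range.1 hj)
        exact mul_le_mul
          (mul_le_mul_of_nonneg_left (hFb j hj') (by positivity))
          (hGb (k - j) (Nat.sub_le k j)) (norm_nonneg _)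
          (mul_nonneg (by positivity) (mul_nonneg c1nn (by positivity)))
      refine h2.trans ?_
      rw [← Finset.sum_mul, ← Finset.sum_mul, sumchoose, mul_assoc]
    calc ‖iteratedFDerivWithin ℝ (k + 1) B s x‖
        = ‖iteratedFDerivWithin ℝ k (fderivWithin ℝ B s) s x‖ :=
          (norm_iteratedFDerivWithin_fderivWithin uniq hx).symm
      _ = ‖iteratedFDerivWithin ℝ k g s x‖ := by
          rw [iteratedFDerivWithin_congr hEq hx]
      _ ≤ ‖compL ℝ (Euc m) (Mat n) (Mat n)‖ *
            (2 ^ k * (‖mulLeftRight ℝ (Mat n)‖ * (2 ^ k * (D * D)) * C)) :=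
          hmain.trans (mul_le_mul_of_nonneg_left hsum c0nn)
      _ ≤ _ := le_max_right _ _

end KeyInvBound

/-- Quantitative bound for derivatives of the matrix inverse: bounds on the derivatives of `A`
up to order `k` at `x` and on `(A x)⁻¹` give a bound, depending only on `n`, `m`, `k`, `C`, on
the `k`-th derivative of `y ↦ (A y)⁻¹` at `x`. -/
theorem iteratedFDeriv_matrix_inv_bound (n m k : ℕ) (C : ℝ) (hC : 0 < C) :
    ∃ D > 0, ∀ (A : EuclideanSpace ℝ (Fin m) → Matrix (Fin n) (Fin n) ℝ)
      (x : EuclideanSpace ℝ (Fin m)) (U : Set (EuclideanSpace ℝ (Fin m))),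
      U ∈ nhds x → ContDiffOn ℝ k A U →
      (∀ᶠ y in nhds x, IsUnit (A y)) →
      (∀ i ≤ k, ‖iteratedFDeriv ℝ i A x‖ ≤ C) →
      ‖(A x)⁻¹‖ ≤ C →
      ‖iteratedFDeriv ℝ k (fun y => (A y)⁻¹) x‖ ≤ D := by
  obtain ⟨D, hD, h⟩ := key_inv_bound n m k C hC
  refine ⟨D, hD, fun A x U hUx hA hunit hbound hinv => ?_⟩
  obtain ⟨s, hsub, hso, hxs⟩ := mem_nhds_iff.1 (Filter.inter_mem hUx hunit)
  have hconv : (fun y => (A y)⁻¹) = fun y => Ring.inverse (A y) :=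
    funext fun y => Matrix.nonsing_inv_eq_ringInverse (A y)
  rw [hconv, ← iteratedFDerivWithin_of_isOpen k hso hxs]
  refine h A x s hso hxs (hA.mono fun y hy => (hsub hy).1) (fun y hy => (hsub hy).2)
    (fun i hi => ?_) ?_ k le_rfl
  · rw [iteratedFDerivWithin_of_isOpen i hso hxs]
    exact hbound i hi
  · rw [← Matrix.nonsing_inv_eq_ringInverse]
    exact hinv
end

section
/- Let m ∈ ℕ, let u : ℝᵐ → ℝ be continuously differentiable and g : ℝᵐ → ℝ continuous, and suppose that for every x ∈ ℝᵐ one has (fderiv ℝ u x) x + u x = g x, i.e. the radial derivative ∑ᵢ xᵢ ∂ᵢu(x) plus u(x) equals g(x). Then for every x ∈ ℝᵐ, u x = ∫ t in (0,1), g (t • x). -/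
/-- Integration of the radial differential equation `(𝓡u) + u = g`: any `C¹` solution of
`∑ᵢ xᵢ ∂ᵢ u(x) + u(x) = g(x)` on `ℝᵐ` satisfies `u x = ∫₀¹ g(t x) dt`. -/
theorem radial_ode_integral (m : ℕ) (u g : EuclideanSpace ℝ (Fin m) → ℝ)
    (hu : ContDiff ℝ 1 u) (hg : Continuous g)
    (heq : ∀ x, fderiv ℝ u x x + u x = g x) :
    ∀ x, u x = ∫ t in Set.Ioo (0:ℝ) 1, g (t • x) := by
  intro x
  have hderiv : ∀ t : ℝ, HasDerivAt (fun s : ℝ => s * u (s • x)) (g (t • x)) t := by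
    intro t
    have h1 : HasDerivAt (fun s : ℝ => s • x) x t := by
      simpa using (hasDerivAt_id t).smul_const x
    have h2 : HasDerivAt (fun s : ℝ => u (s • x)) ((fderiv ℝ u (t • x)) x) t :=
      ((hu.differentiable one_ne_zero (t • x)).hasFDerivAt).comp_hasDerivAt t h1
    have h3 := (hasDerivAt_id t).mul h2
    have key : (fderiv ℝ u (t • x)) (t • x) + u (t • x) = g (t • x) := heq (t • x)
    have hsmul : (fderiv ℝ u (t • x)) (t • x) = t * (fderiv ℝ u (t • x)) x := by
      simp [map_smul, smul_eq_mul]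
    have : u (t • x) * 1 + t * (fderiv ℝ u (t • x)) x = g (t • x) := by
      rw [← hsmul, mul_one]; linarith
    have this2 : u (t • x) + t * (fderiv ℝ u (t • x)) x = g (t • x) := by linarith
    simpa [this2, Pi.mul_def] using h3
  have hint : IntervalIntegrable (fun t : ℝ => g (t • x)) MeasureTheory.volume 0 1 :=
    (hg.comp (by continuity)).intervalIntegrable 0 1
  have := intervalIntegral.integral_eq_sub_of_hasDerivAt
    (f := fun s : ℝ => s * u (s • x)) (a := 0) (b := 1)
    (fun t _ => hderiv t) hint
  have h01 : ∫ t in Set.Ioo (0:ℝ) 1, g (t • x) = ∫ t in (0:ℝ)..1, g (t • x) := by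
    rw [intervalIntegral.integral_of_le (by norm_num),
      MeasureTheory.integral_Ioc_eq_integral_Ioo]
  rw [h01, this]
  simp
end

section
/- Let m ∈ ℕ, let u : ℝᵐ → ℝ be twice continuously differentiable and h : ℝᵐ → ℝ continuous, and suppose that for every x ∈ ℝᵐ one has (𝓡²u)(x) + (𝓡u)(x) = h(x), where (𝓡u)(x) := (fderiv ℝ u x) x is the radial derivative ∑ᵢ xᵢ ∂ᵢu(x) and 𝓡²u = 𝓡(𝓡u). Then for every x ∈ ℝᵐ and every t > 0, (fderiv ℝ u (t • x)) x = t⁻² · ∫ τ in (0,t), h (τ • x). -/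
/-- Integration of the radial differential equation `(𝓡² + 𝓡)u = h`: if `u` is `C²` and
`𝓡(𝓡u)(x) + (𝓡u)(x) = h(x)` where `(𝓡u)(x) = (fderiv ℝ u x) x`, then for `t > 0`
`(fderiv ℝ u (t • x)) x = t⁻² ∫₀ᵗ h(τ x) dτ`. -/
theorem radial_ode_second_order (m : ℕ) (u h : EuclideanSpace ℝ (Fin m) → ℝ)
    (hu : ContDiff ℝ 2 u) (hh : Continuous h)
    (heq : ∀ x, fderiv ℝ (fun y => fderiv ℝ u y y) x x + fderiv ℝ u x x = h x) :
    ∀ (x : EuclideanSpace ℝ (Fin m)) (t : ℝ), 0 < t →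
      fderiv ℝ u (t • x) x = (t ^ 2)⁻¹ * ∫ τ in Set.Ioo (0:ℝ) t, h (τ • x) := by
  intro x t ht
  set v : EuclideanSpace ℝ (Fin m) → ℝ := fun y => fderiv ℝ u y y with hv
  have hdu : ContDiff ℝ 1 (fderiv ℝ u) := hu.fderiv_right (by norm_num)
  have hvdiff : Differentiable ℝ v := fun y =>
    (hdu.differentiable one_ne_zero y).clm_apply differentiableAt_id
  set F : ℝ → ℝ := fun s => s * v (s • x) with hF
  have hFd : ∀ s : ℝ, HasDerivAt F (h (s • x)) s := by
    intro s
    have hc : HasDerivAt (fun s : ℝ => s • x) x s := by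
      simpa using (hasDerivAt_id s).smul_const x
    have hvs : HasDerivAt (fun s : ℝ => v (s • x)) (fderiv ℝ v (s • x) x) s :=
      by have := (hvdiff (s • x)).hasFDerivAt.comp_hasDerivAt (x := s) hc; exact this
    have hmul := (hasDerivAt_id s).mul hvs
    have key : 1 * v (s • x) + s * fderiv ℝ v (s • x) x = h (s • x) := by
      have h1 : s * fderiv ℝ v (s • x) x = fderiv ℝ v (s • x) (s • x) := by
        rw [map_smul]; simp [smul_eq_mul]
      rw [one_mul, h1, add_comm]
      exact heq (s • x)
    have hmul' : HasDerivAt F (1 * v (s • x) + s * fderiv ℝ v (s • x) x) s := by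
      simpa [hF, Pi.mul_def] using hmul
    rw [key] at hmul'
    exact hmul'
  have hcont : Continuous fun τ : ℝ => h (τ • x) :=
    hh.comp (continuous_id.smul continuous_const)
  have hint : ∫ τ in (0:ℝ)..t, h (τ • x) = F t - F 0 :=
    intervalIntegral.integral_eq_sub_of_hasDerivAt (fun s _ => hFd s)
      (hcont.intervalIntegrable 0 t)
  have hIoo : ∫ τ in Set.Ioo (0:ℝ) t, h (τ • x) = F t - F 0 := by
    rw [← MeasureTheory.integral_Ioc_eq_integral_Ioo, ← intervalIntegral.integral_of_le ht.le,
      hint]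
  have hF0 : F 0 = 0 := by simp [hF]
  have hFt : F t = t ^ 2 * fderiv ℝ u (t • x) x := by
    have : v (t • x) = t * fderiv ℝ u (t • x) x := by
      show fderiv ℝ u (t • x) (t • x) = _
      rw [map_smul]; simp [smul_eq_mul]
    rw [hF]; simp only [this]; ring
  rw [hIoo, hF0, hFt, sub_zero]
  field_simp
end

section
/- Let m, k ∈ ℕ and let g : ℝᵐ → ℝ be k-times continuously differentiable. Define u : ℝᵐ → ℝ by u x = ∫ t in (0,1), g (t • x). Then u is k-times continuously differentiable, and for every x ∈ ℝᵐ and all vectors v₁, …, v_k ∈ ℝᵐ, iteratedFDeriv ℝ k u x (v₁, …, v_k) = ∫ t in (0,1), t^k · iteratedFDeriv ℝ k g (t • x) (v₁, …, v_k). -/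
set_option maxHeartbeats 1000000
set_option synthInstance.maxHeartbeats 400000

open MeasureTheory Set Metric

section Aux

variable {H : Type} [NormedAddCommGroup H] [NormedSpace ℝ H] [ProperSpace H]

lemma integ_aux {F : Type} [NormedAddCommGroup F] (f : ℝ → F) (hf : Continuous f) :
    IntegrableOn f (Set.Ioo (0:ℝ) 1) :=
  (hf.integrableOn_Icc (a := 0) (b := 1)).mono_set Set.Ioo_subset_Icc_self

lemma cont_aux {F : Type} [NormedAddCommGroup F] [NormedSpace ℝ F]
    (j : ℕ) (g : H → F) (hg : Continuous g) :
    Continuous (fun x => ∫ t in Set.Ioo (0:ℝ) 1, t ^ j • g (t • x)) := by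
  rw [continuous_iff_continuousAt]
  intro x₀
  obtain ⟨C, hC⟩ : ∃ C, ∀ y ∈ Metric.closedBall (0:H) (‖x₀‖ + 1), ‖g y‖ ≤ C :=
    (isCompact_closedBall 0 _).exists_bound_of_continuousOn hg.continuousOn
  have key : ∀ x ∈ ball x₀ 1, ∀ t ∈ Set.Ioo (0:ℝ) 1,
      ‖t ^ j • g (t • x)‖ ≤ C := by
    intro x hx t ht
    have hmem : t • x ∈ Metric.closedBall (0:H) (‖x₀‖ + 1) := by
      rw [Metric.mem_closedBall, dist_zero_right, norm_smul, Real.norm_eq_abs]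
      have hx' : ‖x‖ ≤ ‖x₀‖ + 1 := by
        have := norm_sub_norm_le x x₀
        have hd : ‖x - x₀‖ < 1 := by rwa [mem_ball, dist_eq_norm] at hx
        linarith
      have : |t| * ‖x‖ ≤ 1 * (‖x₀‖ + 1) := by
        apply mul_le_mul _ hx' (norm_nonneg _) zero_le_one
        rw [abs_of_pos ht.1]; exact ht.2.le
      linarith
    have h1 : ‖t ^ j • g (t • x)‖ = |t| ^ j * ‖g (t • x)‖ := by
      rw [norm_smul, Real.norm_eq_abs, abs_pow]
    have h2 : |t| ^ j ≤ 1 := by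
      apply pow_le_one₀ (abs_nonneg _)
      rw [abs_of_pos ht.1]; exact ht.2.le
    calc ‖t ^ j • g (t • x)‖ = |t| ^ j * ‖g (t • x)‖ := h1
      _ ≤ 1 * C := mul_le_mul h2 (hC _ hmem) (norm_nonneg _) zero_le_one
      _ = C := one_mul C
  apply continuousAt_of_dominated (bound := fun _ => C)
  · filter_upwards with x
    exact (Continuous.aestronglyMeasurable (by fun_prop))
  · filter_upwards [Metric.ball_mem_nhds x₀ one_pos] with x hx
    filter_upwards [MeasureTheory.self_mem_ae_restrict measurableSet_Ioo] with t ht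
    exact key x hx t ht
  · exact integrableOn_const measure_Ioo_lt_top.ne
  · filter_upwards with t
    exact (Continuous.continuousAt (by fun_prop))

lemma hasFDerivAt_aux {F : Type} [NormedAddCommGroup F] [NormedSpace ℝ F] [CompleteSpace F]
    (j : ℕ) (g : H → F) (hg : ContDiff ℝ 1 g) (x₀ : H) :
    HasFDerivAt (fun x => ∫ t in Set.Ioo (0:ℝ) 1, t ^ j • g (t • x))
      (∫ t in Set.Ioo (0:ℝ) 1, t ^ (j+1) • fderiv ℝ g (t • x₀)) x₀ := by
  have hgc : Continuous g := hg.continuous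
  have hg' : Continuous (fderiv ℝ g) := hg.continuous_fderiv one_ne_zero
  obtain ⟨C, hC⟩ : ∃ C, ∀ y ∈ Metric.closedBall (0:H) (‖x₀‖ + 1), ‖fderiv ℝ g y‖ ≤ C :=
    (isCompact_closedBall 0 _).exists_bound_of_continuousOn hg'.continuousOn
  apply hasFDerivAt_integral_of_dominated_of_fderiv_le (s := ball x₀ 1)
    (bound := fun _ => C)
    (F' := fun x t => t ^ (j+1) • fderiv ℝ g (t • x)) (ball_mem_nhds x₀ one_pos)
  · filter_upwards with x
    exact (Continuous.aestronglyMeasurable (by fun_prop))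
  · exact integ_aux _ (by fun_prop)
  · exact (Continuous.aestronglyMeasurable (by fun_prop))
  · filter_upwards [MeasureTheory.self_mem_ae_restrict measurableSet_Ioo] with t ht
    intro x hx
    have hmem : t • x ∈ Metric.closedBall (0:H) (‖x₀‖ + 1) := by
      rw [Metric.mem_closedBall, dist_zero_right, norm_smul, Real.norm_eq_abs]
      have hx' : ‖x‖ ≤ ‖x₀‖ + 1 := by
        have := norm_sub_norm_le x x₀
        have hd : ‖x - x₀‖ < 1 := by rwa [mem_ball, dist_eq_norm] at hx
        linarith
      have : |t| * ‖x‖ ≤ 1 * (‖x₀‖ + 1) := by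
        apply mul_le_mul _ hx' (norm_nonneg _) zero_le_one
        rw [abs_of_pos ht.1]; exact ht.2.le
      linarith
    have h2 : |t| ^ (j+1) ≤ 1 := by
      apply pow_le_one₀ (abs_nonneg _)
      rw [abs_of_pos ht.1]; exact ht.2.le
    have heq : ‖(t ^ (j+1) : ℝ)‖ = |t| ^ (j+1) := by rw [Real.norm_eq_abs, abs_pow]
    calc ‖t ^ (j+1) • fderiv ℝ g (t • x)‖ ≤ ‖(t ^ (j+1) : ℝ)‖ * ‖fderiv ℝ g (t • x)‖ :=
          ContinuousLinearMap.opNorm_smul_le _ _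
      _ = |t| ^ (j+1) * ‖fderiv ℝ g (t • x)‖ := by rw [heq]
      _ ≤ 1 * C := mul_le_mul h2 (hC _ hmem) (norm_nonneg _) zero_le_one
      _ = C := one_mul C
  · exact integrableOn_const measure_Ioo_lt_top.ne
  · filter_upwards [MeasureTheory.self_mem_ae_restrict measurableSet_Ioo] with t ht
    intro x hx
    have h1 : HasFDerivAt (fun x : H => t • x) (t • ContinuousLinearMap.id ℝ H) x :=
      (hasFDerivAt_id x).const_smul t
    have h2 : HasFDerivAt (fun x : H => g (t • x))
        ((fderiv ℝ g (t • x)).comp (t • ContinuousLinearMap.id ℝ H)) x :=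
      ((hg.differentiable one_ne_zero (t • x)).hasFDerivAt).comp x h1
    have h3 := h2.const_smul (t ^ j)
    convert h3 using 1
    ext y
    simp [pow_succ, mul_smul, mul_comm, smul_comm t]
    ext y
    simp [pow_succ, mul_smul, mul_comm, smul_comm t]



lemma cont_integrand_aux {H : Type} [NormedAddCommGroup H] [NormedSpace ℝ H]
    {F : Type} [NormedAddCommGroup F] [NormedSpace ℝ F]
    (n k : ℕ) (g : H → F) (hg : Continuous (iteratedFDeriv ℝ k g)) (x : H) :
    Continuous (fun t : ℝ => t ^ n • iteratedFDeriv ℝ k g (t • x)) :=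
  (continuous_pow n).smul (hg.comp (continuous_id.smul continuous_const))

lemma main_aux {H : Type} [NormedAddCommGroup H] [NormedSpace ℝ H] [ProperSpace H] :
    ∀ (k : ℕ) (F : Type) [NormedAddCommGroup F] [NormedSpace ℝ F] [CompleteSpace F]
      (j : ℕ) (g : H → F), ContDiff ℝ k g →
      ContDiff ℝ k (fun x => ∫ t in Set.Ioo (0:ℝ) 1, t ^ j • g (t • x)) ∧
      ∀ x, iteratedFDeriv ℝ k (fun x => ∫ t in Set.Ioo (0:ℝ) 1, t ^ j • g (t • x)) x =
        ∫ t in Set.Ioo (0:ℝ) 1, t ^ (k + j) • iteratedFDeriv ℝ k g (t • x) := by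
  intro k
  induction k with
  | zero =>
    intro F _ _ _ j g hg
    refine ⟨by simp only [Nat.cast_zero, contDiff_zero]; exact cont_aux j g hg.continuous, fun x => ?_⟩
    have h1 : IntegrableOn (fun t : ℝ => t ^ (0 + j) • iteratedFDeriv ℝ 0 g (t • x))
        (Set.Ioo (0:ℝ) 1) :=
      integ_aux _ (cont_integrand_aux _ _ g (hg.continuous_iteratedFDeriv le_rfl) x)
    ext v
    rw [iteratedFDeriv_zero_apply, ContinuousMultilinearMap.integral_apply h1]
    simp [iteratedFDeriv_zero_apply]
  | succ k ih =>
    intro F _ _ _ j g hg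
    have hg' : ContDiff ℝ ((k : WithTop ℕ∞) + 1) g := by exact_mod_cast hg
    have hg1 : ContDiff ℝ 1 g := hg'.of_le (by
      exact le_add_self)
    have hgf : ContDiff ℝ k (fderiv ℝ g) := (contDiff_succ_iff_fderiv.mp hg').2.2
    have hdiff : ∀ x : H, HasFDerivAt (fun x => ∫ t in Set.Ioo (0:ℝ) 1, t ^ j • g (t • x))
        (∫ t in Set.Ioo (0:ℝ) 1, t ^ (j+1) • fderiv ℝ g (t • x)) x :=
      hasFDerivAt_aux j g hg1
    have hfd : (fderiv ℝ (fun x => ∫ t in Set.Ioo (0:ℝ) 1, t ^ j • g (t • x))) =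
        fun x => ∫ t in Set.Ioo (0:ℝ) 1, t ^ (j+1) • fderiv ℝ g (t • x) :=
      funext fun x => (hdiff x).fderiv
    obtain ⟨ihc, ihf⟩ := ih (H →L[ℝ] F) (j+1) (fderiv ℝ g) hgf
    have hcd : ContDiff ℝ (k+1 : ℕ) (fun x => ∫ t in Set.Ioo (0:ℝ) 1, t ^ j • g (t • x)) := by
      have : ((k+1 : ℕ) : WithTop ℕ∞) = (k : WithTop ℕ∞) + 1 := by push_cast; ring
      rw [this, contDiff_succ_iff_fderiv]
      exact ⟨fun x => (hdiff x).differentiableAt, by simp, hfd ▸ ihc⟩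
    refine ⟨hcd, fun x => ?_⟩
    have hcont : Continuous (iteratedFDeriv ℝ k (fderiv ℝ g)) :=
      hgf.continuous_iteratedFDeriv le_rfl
    have h1 : IntegrableOn
        (fun t : ℝ => t ^ (k + (j+1)) • iteratedFDeriv ℝ k (fderiv ℝ g) (t • x))
        (Set.Ioo (0:ℝ) 1) :=
      integ_aux _ (cont_integrand_aux _ _ _ hcont x)
    have h2 : IntegrableOn
        (fun t : ℝ => t ^ ((k+1) + j) • iteratedFDeriv ℝ (k+1) g (t • x))
        (Set.Ioo (0:ℝ) 1) :=
      integ_aux _ (cont_integrand_aux _ _ _ (hg.continuous_iteratedFDeriv le_rfl) x)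
    ext v
    have hc2 : Continuous fun t : ℝ =>
        (iteratedFDeriv ℝ k (fderiv ℝ g) (t • x)) (Fin.init v) :=
      (continuous_eval_const (Fin.init v)).comp (hcont.comp (continuous_id.smul continuous_const))
    have h1' : IntegrableOn (fun t : ℝ =>
        (t ^ (k + (j+1)) • iteratedFDeriv ℝ k (fderiv ℝ g) (t • x)) (Fin.init v))
        (Set.Ioo (0:ℝ) 1) := by
      simp only [ContinuousMultilinearMap.smul_apply]
      exact integ_aux _ ((continuous_pow _).smul hc2)
    rw [ContinuousMultilinearMap.integral_apply h2, iteratedFDeriv_succ_apply_right]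
    simp only [hfd]
    rw [ihf x, ContinuousMultilinearMap.integral_apply h1,
      ContinuousLinearMap.integral_apply h1']
    apply MeasureTheory.integral_congr_ae
    filter_upwards with t
    have hexp : k + (j+1) = k + 1 + j := by omega
    rw [hexp]
    simp only [ContinuousMultilinearMap.smul_apply, ContinuousLinearMap.smul_apply,
      iteratedFDeriv_succ_apply_right]

end Aux

/-- Differentiation under the integral sign for the radial integral representation:
if `g` is `Cᵏ` and `u x = ∫₀¹ g(t x) dt`, then `u` is `Cᵏ` and
`D^k u(x)(v₁,…,v_k) = ∫₀¹ tᵏ D^k g(t x)(v₁,…,v_k) dt`. -/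
theorem contDiff_radial_integral (m k : ℕ) (g : EuclideanSpace ℝ (Fin m) → ℝ)
    (hg : ContDiff ℝ k g)
    (u : EuclideanSpace ℝ (Fin m) → ℝ)
    (hu : ∀ x, u x = ∫ t in Set.Ioo (0:ℝ) 1, g (t • x)) :
    ContDiff ℝ k u ∧
      ∀ (x : EuclideanSpace ℝ (Fin m)) (v : Fin k → EuclideanSpace ℝ (Fin m)),
        iteratedFDeriv ℝ k u x v =
          ∫ t in Set.Ioo (0:ℝ) 1, t ^ k * iteratedFDeriv ℝ k g (t • x) v := by
  have hueq : u = fun x => ∫ t in Set.Ioo (0:ℝ) 1, t ^ 0 • g (t • x) := by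
    funext x; rw [hu x]; simp
  obtain ⟨h1, h2⟩ := main_aux k ℝ 0 g hg
  refine ⟨hueq ▸ h1, fun x v => ?_⟩
  have hint : IntegrableOn (fun t : ℝ => t ^ (k + 0) • iteratedFDeriv ℝ k g (t • x))
      (Set.Ioo (0:ℝ) 1) :=
    integ_aux _ (cont_integrand_aux _ _ g (hg.continuous_iteratedFDeriv le_rfl) x)
  rw [hueq, h2 x, ContinuousMultilinearMap.integral_apply hint]
  simp [smul_eq_mul]
end

section
/- Let n ∈ ℕ, T > 0, L ≥ 0. Let F : ℝ × ℝⁿ → ℝⁿ be continuously differentiable with ‖fderiv ℝ (fun y ↦ F (t, y)) y‖ ≤ L for all t ∈ [0,T] and all y ∈ ℝⁿ. Let φ : ℝ × ℝⁿ → ℝⁿ be continuously differentiable with φ (0, x) = x for all x ∈ ℝⁿ and with ∂φ/∂t (t, x) = F (t, φ (t, x)) for all t ∈ [0,T] and x ∈ ℝⁿ. Then for every x₀ ∈ ℝⁿ and every t ∈ [0,T], ‖fderiv ℝ (fun x ↦ φ (t, x)) x₀‖ ≤ exp (L · t). -/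
/-- Exponential bound on the derivative of a flow with respect to initial conditions: if
`‖∂F/∂x‖ ≤ L` on `[0,T] × ℝⁿ` and `φ` is the flow of `x' = F(t,x)`, then
`‖∂φ(t,·)/∂x‖ ≤ exp (L t)` for `t ∈ [0,T]`. -/
theorem flow_fderiv_exp_bound (n : ℕ) (T L : ℝ) (hT : 0 < T) (hL : 0 ≤ L)
    (F : ℝ × EuclideanSpace ℝ (Fin n) → EuclideanSpace ℝ (Fin n))
    (hF : ContDiff ℝ 1 F)
    (hFbound : ∀ t ∈ Set.Icc (0:ℝ) T, ∀ y : EuclideanSpace ℝ (Fin n),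
      ‖fderiv ℝ (fun z => F (t, z)) y‖ ≤ L)
    (φ : ℝ × EuclideanSpace ℝ (Fin n) → EuclideanSpace ℝ (Fin n))
    (hφ : ContDiff ℝ 1 φ)
    (hφ0 : ∀ x, φ (0, x) = x)
    (hφt : ∀ t ∈ Set.Icc (0:ℝ) T, ∀ x : EuclideanSpace ℝ (Fin n),
      HasDerivAt (fun τ => φ (τ, x)) (F (t, φ (t, x))) t) :
    ∀ (x₀ : EuclideanSpace ℝ (Fin n)), ∀ t ∈ Set.Icc (0:ℝ) T,
      ‖fderiv ℝ (fun x => φ (t, x)) x₀‖ ≤ Real.exp (L * t) := by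
  intro x₀ t ht
  -- clamped time
  set proj : ℝ → ℝ := fun τ => max 0 (min τ T) with hproj
  have hprojmem : ∀ τ, proj τ ∈ Set.Icc (0:ℝ) T := fun τ =>
    ⟨le_max_left _ _, max_le (le_of_lt hT) (min_le_right _ _)⟩
  have hprojeq : ∀ τ ∈ Set.Ico (0:ℝ) T, proj τ = τ := by
    intro τ hτ
    simp [hproj, min_eq_left hτ.2.le, max_eq_right hτ.1]
  set v : ℝ → EuclideanSpace ℝ (Fin n) → EuclideanSpace ℝ (Fin n) :=
    fun τ z => F (proj τ, z) with hv
  -- each v τ is Lipschitz with constant L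
  have hlipv : ∀ τ, LipschitzWith L.toNNReal (v τ) := by
    intro τ
    apply lipschitzWith_of_nnnorm_fderiv_le (𝕜 := ℝ)
    · exact (hF.comp (contDiff_const.prodMk contDiff_id)).differentiable one_ne_zero
    · intro x
      rw [← NNReal.coe_le_coe, coe_nnnorm, Real.coe_toNNReal _ hL]
      exact hFbound _ (hprojmem τ) x
  -- key Lipschitz estimate for the flow
  have key : ∀ x y : EuclideanSpace ℝ (Fin n),
      dist (φ (t, x)) (φ (t, y)) ≤ dist x y * Real.exp (L * t) := by
    intro x y
    have hcont : ∀ z : EuclideanSpace ℝ (Fin n),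
        ContinuousOn (fun τ => φ (τ, z)) (Set.Icc 0 T) :=
      fun z => (hφ.continuous.comp (continuous_id.prodMk continuous_const)).continuousOn
    have hderiv : ∀ z : EuclideanSpace ℝ (Fin n), ∀ τ ∈ Set.Ico (0:ℝ) T,
        HasDerivWithinAt (fun τ => φ (τ, z)) (v τ (φ (τ, z))) (Set.Ici τ) τ := by
      intro z τ hτ
      have := (hφt τ ⟨hτ.1, hτ.2.le⟩ z).hasDerivWithinAt (s := Set.Ici τ)
      simpa [hv, hprojeq τ hτ] using this
    have := dist_le_of_trajectories_ODE hlipv (hcont x) (hderiv x) (hcont y) (hderiv y)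
      (by rw [hφ0 x, hφ0 y]) t ht
    simpa [Real.coe_toNNReal _ hL] using this
  -- conclude: φ(t,·) is Lipschitz with constant exp (L t)
  have hlipφ : LipschitzWith (Real.exp (L * t)).toNNReal (fun x => φ (t, x)) := by
    apply LipschitzWith.of_dist_le_mul
    intro x y
    rw [Real.coe_toNNReal _ (Real.exp_nonneg _), mul_comm]
    exact key x y
  have := norm_fderiv_le_of_lipschitz ℝ hlipφ (x₀ := x₀)
  rwa [Real.coe_toNNReal _ (Real.exp_nonneg _)] at this
end
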